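/- Let n ≥ 4 and let 𝓕 ⊆ ([n] choose 2) be a family of 2-element subsets of [n] such that |A∩B| + |B∩C| + |C∩A| ≥ 2 for all A, B, C ∈ 𝓕. Then |𝓕| ≤ n + 2. -/

import Mathlib

/-- `d A B C = |A∩B| + |B∩C| + |C∩A|`. -/
def dd (A B C : Finset ℕ) : ℕ := (A ∩ B).card + (B ∩ C).card + (C ∩ A).card

lemma eq_pair {C : Finset ℕ} {a b : ℕ} (hC : C.card = 2) (ha : a ∈ C) (hb : b ∈ C)
    (hab : a ≠ b) : C = {a, b} := by
  have hsub : ({a, b} : Finset ℕ) ⊆ C := by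
    intro z hz
    simp only [Finset.mem_insert, Finset.mem_singleton] at hz
    rcases hz with rfl | rfl <;> assumption
  have hcard : C.card ≤ ({a, b} : Finset ℕ).card := by
    rw [Finset.card_pair hab, hC]
  exact (Finset.eq_of_subset_of_card_le hsub hcard).symm

theorem stmt6 (n : ℕ) (hn : 4 ≤ n) (𝓕 : Finset (Finset ℕ))
    (h𝓕 : 𝓕 ⊆ (Finset.Icc 1 n).powersetCard 2)
    (hd : ∀ A ∈ 𝓕, ∀ B ∈ 𝓕, ∀ C ∈ 𝓕, 2 ≤ dd A B C) :
    𝓕.card ≤ n + 2 := by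
  have hcard : ∀ A ∈ 𝓕, A.card = 2 := fun A hA => (Finset.mem_powersetCard.1 (h𝓕 hA)).2
  have hsub : ∀ A ∈ 𝓕, A ⊆ Finset.Icc 1 n := fun A hA => (Finset.mem_powersetCard.1 (h𝓕 hA)).1
  by_cases hdisj : ∃ A ∈ 𝓕, ∃ B ∈ 𝓕, A ∩ B = ∅
  · -- Case: some disjoint pair A, B exists
    obtain ⟨A, hA, B, hB, hAB⟩ := hdisj
    have hABne : A ≠ B := by
      intro h
      subst h
      rw [Finset.inter_self] at hAB
      have := hcard A hA
      rw [hAB] at this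
      simp at this
    -- every other C meets both A and B
    have hmeetA : ∀ C ∈ 𝓕, C ≠ B → (C ∩ A).Nonempty := by
      intro C hC hCB
      rw [Finset.nonempty_iff_ne_empty]
      intro hCA
      have h2 := hd A hA C hC B hB
      unfold dd at h2
      rw [Finset.inter_comm A C, hCA, Finset.inter_comm B A, hAB] at h2
      simp only [Finset.card_empty] at h2
      -- 2 ≤ (C ∩ B).card, so C = B
      have hCBsub : C ∩ B ⊆ C := Finset.inter_subset_left
      have : C ⊆ B := by
        have heq : C ∩ B = C := Finset.eq_of_subset_of_card_le hCBsub
          (by rw [hcard C hC]; omega)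
        rw [← heq]; exact Finset.inter_subset_right
      exact hCB (Finset.eq_of_subset_of_card_le this
        (by rw [hcard C hC, hcard B hB]))
    have hmeetB : ∀ C ∈ 𝓕, C ≠ A → (C ∩ B).Nonempty := by
      intro C hC hCA
      rw [Finset.nonempty_iff_ne_empty]
      intro hCB
      have h2 := hd B hB C hC A hA
      unfold dd at h2
      rw [Finset.inter_comm B C, hCB, hAB] at h2
      simp only [Finset.card_empty] at h2
      have hCAsub : C ∩ A ⊆ C := Finset.inter_subset_left
      have : C ⊆ A := by
        have heq : C ∩ A = C := Finset.eq_of_subset_of_card_le hCAsub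
          (by rw [hcard C hC]; omega)
        rw [← heq]; exact Finset.inter_subset_right
      exact hCA (Finset.eq_of_subset_of_card_le this
        (by rw [hcard C hC, hcard A hA]))
    have hsubset : 𝓕 ⊆ insert A (insert B ((A ×ˢ B).image fun p => ({p.1, p.2} : Finset ℕ))) := by
      intro C hC
      simp only [Finset.mem_insert]
      by_cases hCA : C = A
      · left; exact hCA
      by_cases hCB : C = B
      · right; left; exact hCB
      right; right
      obtain ⟨a, ha⟩ := hmeetA C hC hCB
      obtain ⟨b, hb⟩ := hmeetB C hC hCA
      rw [Finset.mem_inter] at ha hb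
      have hab : a ≠ b := by
        intro h
        subst h
        have : a ∈ A ∩ B := Finset.mem_inter.2 ⟨ha.2, hb.2⟩
        rw [hAB] at this
        exact absurd this (Finset.notMem_empty a)
      rw [Finset.mem_image]
      exact ⟨(a, b), Finset.mem_product.2 ⟨ha.2, hb.2⟩,
        (eq_pair (hcard C hC) ha.1 hb.1 hab).symm⟩
    calc 𝓕.card ≤ (insert A (insert B ((A ×ˢ B).image fun p => ({p.1, p.2} : Finset ℕ)))).card :=
          Finset.card_le_card hsubset
      _ ≤ ((A ×ˢ B).image fun p => ({p.1, p.2} : Finset ℕ)).card + 2 := by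
          have h1 := Finset.card_insert_le B ((A ×ˢ B).image fun p => ({p.1, p.2} : Finset ℕ))
          have h2 := Finset.card_insert_le A
            (insert B ((A ×ˢ B).image fun p => ({p.1, p.2} : Finset ℕ)))
          omega
      _ ≤ (A ×ˢ B).card + 2 := by
          have := Finset.card_image_le (s := A ×ˢ B)
            (f := fun p => ({p.1, p.2} : Finset ℕ))
          omega
      _ ≤ n + 2 := by
          rw [Finset.card_product, hcard A hA, hcard B hB]
          omega
  · -- Case: intersecting family
    push_neg at hdisj
    have hmeet : ∀ A ∈ 𝓕, ∀ B ∈ 𝓕, (A ∩ B).Nonempty := by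
      intro A hA B hB
      rw [Finset.nonempty_iff_ne_empty]
      exact Finset.nonempty_iff_ne_empty.mp (hdisj A hA B hB)
    rcases 𝓕.eq_empty_or_nonempty with h | ⟨A, hA⟩
    · rw [h]; simp
    obtain ⟨x, y, hxy, hAxy⟩ := Finset.card_eq_two.1 (hcard A hA)
    by_cases hx : ∀ E ∈ 𝓕, x ∈ E
    · -- all edges contain x: bounded by n
      have : 𝓕 ⊆ (Finset.Icc 1 n).image fun z => ({x, z} : Finset ℕ) := by
        intro E hE
        have hxE := hx E hE
        have h1 : (E.erase x).card = 1 := by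
          rw [Finset.card_erase_of_mem hxE, hcard E hE]
        obtain ⟨z, hz⟩ := Finset.card_eq_one.1 h1
        have hzE : z ∈ E := Finset.erase_subset x E (hz ▸ Finset.mem_singleton_self z)
        have hzn : z ∈ Finset.Icc 1 n := hsub E hE hzE
        rw [Finset.mem_image]
        refine ⟨z, hzn, ?_⟩
        have : E = insert x (E.erase x) := (Finset.insert_erase hxE).symm
        rw [this, hz]
      calc 𝓕.card ≤ ((Finset.Icc 1 n).image fun z => ({x, z} : Finset ℕ)).card :=
            Finset.card_le_card this
        _ ≤ (Finset.Icc 1 n).card := Finset.card_image_le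
        _ ≤ n + 2 := by rw [Nat.card_Icc]; omega
    by_cases hy : ∀ E ∈ 𝓕, y ∈ E
    · have : 𝓕 ⊆ (Finset.Icc 1 n).image fun z => ({y, z} : Finset ℕ) := by
        intro E hE
        have hyE := hy E hE
        have h1 : (E.erase y).card = 1 := by
          rw [Finset.card_erase_of_mem hyE, hcard E hE]
        obtain ⟨z, hz⟩ := Finset.card_eq_one.1 h1
        have hzE : z ∈ E := Finset.erase_subset y E (hz ▸ Finset.mem_singleton_self z)
        have hzn : z ∈ Finset.Icc 1 n := hsub E hE hzE
        rw [Finset.mem_image]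
        refine ⟨z, hzn, ?_⟩
        have : E = insert y (E.erase y) := (Finset.insert_erase hyE).symm
        rw [this, hz]
      calc 𝓕.card ≤ ((Finset.Icc 1 n).image fun z => ({y, z} : Finset ℕ)).card :=
            Finset.card_le_card this
        _ ≤ (Finset.Icc 1 n).card := Finset.card_image_le
        _ ≤ n + 2 := by rw [Nat.card_Icc]; omega
    -- triangle case
    push_neg at hx hy
    obtain ⟨C, hC, hxC⟩ := hx
    obtain ⟨D, hD, hyD⟩ := hy
    -- C contains y, D contains x
    have hyC : y ∈ C := by
      obtain ⟨w, hw⟩ := hmeet C hC A hA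
      rw [Finset.mem_inter, hAxy] at hw
      simp only [Finset.mem_insert, Finset.mem_singleton] at hw
      rcases hw.2 with rfl | rfl
      · exact absurd hw.1 hxC
      · exact hw.1
    have hxD : x ∈ D := by
      obtain ⟨w, hw⟩ := hmeet D hD A hA
      rw [Finset.mem_inter, hAxy] at hw
      simp only [Finset.mem_insert, Finset.mem_singleton] at hw
      rcases hw.2 with rfl | rfl
      · exact hw.1
      · exact absurd hw.1 hyD
    -- get the third vertex u
    obtain ⟨u, hu⟩ := hmeet C hC D hD
    rw [Finset.mem_inter] at hu
    have hux : u ≠ x := fun h => hxC (h ▸ hu.1)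
    have huy : u ≠ y := fun h => hyD (h ▸ hu.2)
    have hCeq : C = {y, u} := eq_pair (hcard C hC) hyC hu.1 (Ne.symm huy)
    have hDeq : D = {x, u} := eq_pair (hcard D hD) hxD hu.2 (Ne.symm hux)
    have hsubset : 𝓕 ⊆ {({x, y} : Finset ℕ), {y, u}, {x, u}} := by
      intro E hE
      simp only [Finset.mem_insert, Finset.mem_singleton]
      obtain ⟨w, hw⟩ := hmeet E hE A hA
      rw [Finset.mem_inter, hAxy] at hw
      simp only [Finset.mem_insert, Finset.mem_singleton] at hw
      by_cases hxE : x ∈ E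
      · by_cases hyE : y ∈ E
        · left; exact eq_pair (hcard E hE) hxE hyE hxy
        · -- x ∈ E, y ∉ E : E meets C = {y,u}, so u ∈ E
          obtain ⟨v, hv⟩ := hmeet E hE C hC
          rw [Finset.mem_inter, hCeq] at hv
          simp only [Finset.mem_insert, Finset.mem_singleton] at hv
          rcases hv.2 with rfl | rfl
          · exact absurd hv.1 hyE
          · right; right; exact eq_pair (hcard E hE) hxE hv.1 hux.symm
      · -- x ∉ E, so y ∈ E; E meets D = {x,u}, so u ∈ E
        have hyE : y ∈ E := by
          rcases hw.2 with rfl | rfl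
          · exact absurd hw.1 hxE
          · exact hw.1
        obtain ⟨v, hv⟩ := hmeet E hE D hD
        rw [Finset.mem_inter, hDeq] at hv
        simp only [Finset.mem_insert, Finset.mem_singleton] at hv
        rcases hv.2 with rfl | rfl
        · exact absurd hv.1 hxE
        · right; left; exact eq_pair (hcard E hE) hyE hv.1 huy.symm
    calc 𝓕.card ≤ ({({x, y} : Finset ℕ), {y, u}, {x, u}} : Finset (Finset ℕ)).card :=
          Finset.card_le_card hsubset
      _ ≤ 3 := by
          apply le_trans (Finset.card_insert_le _ _)
          have := Finset.card_insert_le ({y, u} : Finset ℕ) ({({x, u} : Finset ℕ)} : Finset (Finset ℕ))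
          simp only [Finset.card_singleton] at this
          omega
      _ ≤ n + 2 := by omega
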